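/- Under assumptions (H) on the perturbed dynamical system, let a > 0 satisfy 1/a ≤ p − 1 and set ψ₁(x) = exp(a|x|). Then C' := C · E[exp((1+a)|ξ|)] is finite and, for all x ∈ E, P_1 ψ₁(x) ≤ C' ψ₁(x) exp(−a(|x| − p|F(x)|)). -/

import Mathlib

open MeasureTheory Set

noncomputable section

variable {d : ℕ}

/-- The law of a (possibly non-centered) nondegenerate Gaussian random vector on `ℝ^d`:
it has a density with mean `m` and positive-definite covariance matrix `Cov` with
respect to the Lebesgue measure. -/
def IsNondegGaussian (γ : Measure (EuclideanSpace ℝ (Fin d))) : Prop :=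
  ∃ (m : EuclideanSpace ℝ (Fin d)) (Cov : Matrix (Fin d) (Fin d) ℝ), Cov.PosDef ∧
    γ = volume.withDensity (fun z => ENNReal.ofReal
      ((Real.sqrt ((2 * Real.pi) ^ d * Cov.det))⁻¹ *
        Real.exp (-(∑ i, ∑ j, (z i - m i) * Cov⁻¹ i j * (z j - m j)) / 2)))

/-- One step of the Feynman–Kac semigroup associated with the perturbed dynamical
system `X_{n+1} = F(X_n) + ξ_n` (noise law `γ`), penalization `G` and domain `Edom`:
`P_1 f(x) = ∫ G(F(x)+z) 1_{Edom}(F(x)+z) f(F(x)+z) γ(dz)`. -/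
def FKstep (Edom : Set (EuclideanSpace ℝ (Fin d)))
    (F : EuclideanSpace ℝ (Fin d) → EuclideanSpace ℝ (Fin d))
    (G : EuclideanSpace ℝ (Fin d) → ℝ) (γ : Measure (EuclideanSpace ℝ (Fin d)))
    (f : EuclideanSpace ℝ (Fin d) → ℝ) (x : EuclideanSpace ℝ (Fin d)) : ℝ :=
  ∫ z, Edom.indicator (fun y => G y * f y) (F x + z) ∂γ

/-- The Feynman–Kac semigroup: `P_0 = Id`, `P_n = (P_1)^n`. -/
def FK (Edom : Set (EuclideanSpace ℝ (Fin d)))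
    (F : EuclideanSpace ℝ (Fin d) → EuclideanSpace ℝ (Fin d))
    (G : EuclideanSpace ℝ (Fin d) → ℝ) (γ : Measure (EuclideanSpace ℝ (Fin d))) :
    ℕ → (EuclideanSpace ℝ (Fin d) → ℝ) → EuclideanSpace ℝ (Fin d) → ℝ :=
  fun n => (FKstep Edom F G γ)^[n]

lemma integrable_rexp_neg_mul_sq_norm {d : ℕ} {b : ℝ} (hb : 0 < b) :
    Integrable (fun v : EuclideanSpace ℝ (Fin d) => Real.exp (-b * ‖v‖^2)) := by
  have h := (GaussianFourier.integrable_cexp_neg_mul_sq_norm_add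
    (V := EuclideanSpace ℝ (Fin d)) (b := (b:ℂ)) (by simpa using hb) 0 0).norm
  refine h.congr (Filter.Eventually.of_forall fun v => ?_)
  simp [Complex.norm_exp, ← Complex.ofReal_pow]

lemma quad_lower {d : ℕ} (A : Matrix (Fin d) (Fin d) ℝ) (hA : A.PosDef) :
    ∃ lam : ℝ, 0 < lam ∧ ∀ v : EuclideanSpace ℝ (Fin d),
      lam * ‖v‖^2 ≤ ∑ i, ∑ j, v i * A i j * v j := by
  set f : EuclideanSpace ℝ (Fin d) → ℝ := fun v => ∑ i, ∑ j, v i * A i j * v j with hf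
  have hfd : ∀ v : EuclideanSpace ℝ (Fin d), f v = dotProduct v.ofLp (A.mulVec v.ofLp) := by
    intro v
    simp only [hf, dotProduct, Matrix.mulVec, Finset.mul_sum, mul_assoc]
  have hpos : ∀ v : EuclideanSpace ℝ (Fin d), v ≠ 0 → 0 < f v := by
    intro v hv
    rw [hfd]
    simpa using hA.dotProduct_mulVec_pos (x := v.ofLp) (by simpa using hv)
  have hcont : Continuous f := by
    apply continuous_finset_sum; intro i _
    apply continuous_finset_sum; intro j _
    exact ((EuclideanSpace.proj i).continuous.mul continuous_const).mul
      (EuclideanSpace.proj j).continuous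
  have hhom : ∀ (c : ℝ) (v : EuclideanSpace ℝ (Fin d)), f (c • v) = c^2 * f v := by
    intro c v
    simp only [hf, Finset.mul_sum]
    refine Finset.sum_congr rfl fun i _ => Finset.sum_congr rfl fun j _ => ?_
    simp only [PiLp.smul_apply, smul_eq_mul]
    ring
  by_cases hS : (Metric.sphere (0 : EuclideanSpace ℝ (Fin d)) 1).Nonempty
  · obtain ⟨x₀, hx₀, hmin⟩ := (isCompact_sphere (0 : EuclideanSpace ℝ (Fin d)) 1).exists_isMinOn
      hS hcont.continuousOn
    have hx₀n : ‖x₀‖ = 1 := by simpa using hx₀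
    refine ⟨f x₀, hpos x₀ (by intro h; rw [h] at hx₀n; simp at hx₀n), fun v => ?_⟩
    rcases eq_or_ne v 0 with rfl | hv
    · simp [hf]
    · have hvn : (0:ℝ) < ‖v‖ := norm_pos_iff.2 hv
      set u : EuclideanSpace ℝ (Fin d) := ‖v‖⁻¹ • v with hu
      have hun : u ∈ Metric.sphere (0 : EuclideanSpace ℝ (Fin d)) 1 := by
        simp [hu, norm_smul, abs_of_pos (inv_pos.2 hvn), inv_mul_cancel₀ hvn.ne']
      have h1 : f x₀ ≤ f u := hmin hun
      have h2 : f v = ‖v‖^2 * f u := by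
        rw [hu, ← hhom, smul_inv_smul₀ hvn.ne']
      show f x₀ * ‖v‖^2 ≤ f v
      rw [h2, mul_comm (f x₀)]
      exact mul_le_mul_of_nonneg_left h1 (by positivity)
  · refine ⟨1, one_pos, fun v => ?_⟩
    rcases eq_or_ne v 0 with rfl | hv
    · simp [hf]
    · exact absurd ⟨‖v‖⁻¹ • v, by
        have hvn : (0:ℝ) < ‖v‖ := norm_pos_iff.2 hv
        simp [norm_smul, abs_of_pos (inv_pos.2 hvn), inv_mul_cancel₀ hvn.ne']⟩ hS


lemma gaussian_integrable_exp_mul_norm {d : ℕ} {γ : Measure (EuclideanSpace ℝ (Fin d))}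
    (hγ : IsNondegGaussian γ) {c : ℝ} (hc : 0 < c) :
    Integrable (fun z => Real.exp (c * ‖z‖)) γ := by
  obtain ⟨m, Cov, hCov, rfl⟩ := hγ
  obtain ⟨lam, hlam, hquad⟩ := quad_lower Cov⁻¹ hCov.inv
  set K0 : ℝ := (Real.sqrt ((2 * Real.pi) ^ d * Cov.det))⁻¹ with hK0
  have hK0nn : 0 ≤ K0 := by positivity
  set Q : EuclideanSpace ℝ (Fin d) → ℝ :=
    fun z => ∑ i, ∑ j, (z i - m i) * Cov⁻¹ i j * (z j - m j) with hQ
  have hQc : Continuous Q := by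
    apply continuous_finset_sum; intro i _
    apply continuous_finset_sum; intro j _
    exact (((EuclideanSpace.proj i).continuous.sub continuous_const).mul
      continuous_const).mul ((EuclideanSpace.proj j).continuous.sub continuous_const)
  set g : EuclideanSpace ℝ (Fin d) → ℝ := fun z => K0 * Real.exp (-Q z / 2) with hg
  have hgc : Continuous g := continuous_const.mul ((hQc.neg.div_const 2).rexp)
  have hgnn : ∀ z, 0 ≤ g z := fun z => by positivity
  rw [integrable_withDensity_iff_integrable_smul'
    (f := fun z => ENNReal.ofReal (g z))
    (ENNReal.measurable_ofReal.comp hgc.measurable :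
      Measurable fun z => ENNReal.ofReal (g z))
    (Filter.Eventually.of_forall fun z => ENNReal.ofReal_lt_top)]
  have heq : (fun z : EuclideanSpace ℝ (Fin d) =>
      (ENNReal.ofReal (g z)).toReal • Real.exp (c * ‖z‖)) =
      fun z => g z * Real.exp (c * ‖z‖) := by
    funext z; rw [ENNReal.toReal_ofReal (hgnn z), smul_eq_mul]
  rw [heq]
  set B : ℝ := (lam * ‖m‖ + c)^2 / lam with hB
  have hBl : B * lam = (lam * ‖m‖ + c)^2 := div_mul_cancel₀ _ hlam.ne'
  refine Integrable.mono
    (((integrable_rexp_neg_mul_sq_norm (d := d) (b := lam/4) (by positivity)).const_mul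
      (K0 * Real.exp B)))
    (hgc.mul (Real.continuous_exp.comp (continuous_const.mul continuous_norm))).aestronglyMeasurable
    (Filter.Eventually.of_forall fun z => ?_)
  have hQz : lam * ‖z - m‖^2 ≤ Q z := by
    have := hquad (z - m)
    simpa [PiLp.sub_apply] using this
  have hnd : (‖z‖ - ‖m‖)^2 ≤ ‖z - m‖^2 := by
    have h1 : |‖z‖ - ‖m‖| ≤ ‖z - m‖ := abs_norm_sub_norm_le z m
    calc (‖z‖ - ‖m‖)^2 = |‖z‖ - ‖m‖|^2 := (sq_abs _).symm
    _ ≤ ‖z - m‖^2 := pow_le_pow_left₀ (abs_nonneg _) h1 2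
  have hkey : -Q z / 2 + c * ‖z‖ ≤ B - lam / 4 * ‖z‖^2 := by
    have h2 : lam * (‖z‖ - ‖m‖)^2 ≤ Q z :=
      le_trans (by nlinarith) hQz
    rw [← mul_le_mul_iff_right₀ hlam]
    nlinarith [hBl, sq_nonneg (lam * ‖m‖ + c - lam * ‖z‖ / 2), sq_nonneg (lam * ‖m‖),
      mul_le_mul_of_nonneg_left h2 hlam.le]
  have hle : g z * Real.exp (c * ‖z‖) ≤ K0 * Real.exp B * Real.exp (-(lam/4) * ‖z‖^2) := by
    rw [hg, mul_assoc, mul_assoc, ← Real.exp_add, ← Real.exp_add]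
    exact mul_le_mul_of_nonneg_left (Real.exp_le_exp.2 (by linarith)) hK0nn
  rw [Real.norm_eq_abs, abs_of_nonneg (by positivity)]
  calc g z * Real.exp (c * ‖z‖) ≤ K0 * Real.exp B * Real.exp (-(lam/4) * ‖z‖^2) := hle
  _ ≤ ‖K0 * Real.exp B * Real.exp (-(lam/4) * ‖z‖^2)‖ := le_abs_self _


/-- Drift estimate: under assumptions (H), with `ψ₁(x) = exp(a|x|)` and `1/a ≤ p - 1`,
`C' := C·E[exp((1+a)|ξ|)]` is finite and `P_1 ψ₁(x) ≤ C' ψ₁(x) exp(-a(|x| - p|F(x)|))`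
for all `x ∈ E`. -/
theorem FK_drift_estimate
    (Edom : Set (EuclideanSpace ℝ (Fin d)))
    (hEm : MeasurableSet Edom) (hEpos : 0 < volume Edom)
    (F : EuclideanSpace ℝ (Fin d) → EuclideanSpace ℝ (Fin d))
    (hFm : Measurable F)
    (hFloc : ∀ R : ℝ, ∃ M : ℝ, ∀ x, ‖x‖ ≤ R → ‖F x‖ ≤ M)
    (G : EuclideanSpace ℝ (Fin d) → ℝ)
    (hGm : Measurable G) (hGpos : ∀ x ∈ Edom, 0 < G x)
    (hGinvloc : ∀ R : ℝ, ∃ M : ℝ, ∀ x ∈ Edom, ‖x‖ ≤ R → 1 / G x ≤ M)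
    (C : ℝ) (hC : 0 < C) (hGgrowth : ∀ x ∈ Edom, G x ≤ C * Real.exp ‖x‖)
    (p : ℝ) (hp : 1 < p)
    (hdrift : ∀ M : ℝ, ∃ R : ℝ, ∀ x, R ≤ ‖x‖ → M ≤ ‖x‖ - p * ‖F x‖)
    (γ : Measure (EuclideanSpace ℝ (Fin d))) (hγ : IsNondegGaussian γ)
    (a : ℝ) (ha : 0 < a) (hap : 1 / a ≤ p - 1) :
    Integrable (fun z => Real.exp ((1 + a) * ‖z‖)) γ ∧
      ∀ x ∈ Edom,
        FK Edom F G γ 1 (fun y => Real.exp (a * ‖y‖)) x ≤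
          (C * ∫ z, Real.exp ((1 + a) * ‖z‖) ∂γ) * Real.exp (a * ‖x‖) *
            Real.exp (-(a * (‖x‖ - p * ‖F x‖))) := by
  have hInt : Integrable (fun z => Real.exp ((1 + a) * ‖z‖)) γ :=
    gaussian_integrable_exp_mul_norm hγ (by linarith)
  refine ⟨hInt, fun x hx => ?_⟩
  
  set I : ℝ := ∫ z, Real.exp ((1 + a) * ‖z‖) ∂γ with hI
  have hInn : 0 ≤ I := integral_nonneg fun z => (Real.exp_pos _).le
  have step1 : (∫ z, Edom.indicator (fun y => G y * Real.exp (a * ‖y‖)) (F x + z) ∂γ) ≤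
      ∫ z, C * Real.exp ((1 + a) * ‖F x‖) * Real.exp ((1 + a) * ‖z‖) ∂γ := by
    refine integral_mono_of_nonneg (Filter.Eventually.of_forall fun z => ?_)
      ((hInt.const_mul _)) (Filter.Eventually.of_forall fun z => ?_)
    · exact Set.indicator_nonneg (fun y hy =>
        mul_nonneg (hGpos y hy).le (Real.exp_pos _).le) _
    · by_cases hy : F x + z ∈ Edom
      · simp only [Set.indicator_of_mem hy]
        calc G (F x + z) * Real.exp (a * ‖F x + z‖)
            ≤ C * Real.exp ‖F x + z‖ * Real.exp (a * ‖F x + z‖) :=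
              mul_le_mul_of_nonneg_right (hGgrowth _ hy) (Real.exp_pos _).le
          _ = C * Real.exp ((1 + a) * ‖F x + z‖) := by
              rw [mul_assoc, ← Real.exp_add]; ring_nf
          _ ≤ C * Real.exp ((1 + a) * (‖F x‖ + ‖z‖)) := by
              exact mul_le_mul_of_nonneg_left (Real.exp_le_exp.2
                (mul_le_mul_of_nonneg_left (norm_add_le _ _) (by linarith))) hC.le
          _ = C * Real.exp ((1 + a) * ‖F x‖) * Real.exp ((1 + a) * ‖z‖) := by
              rw [mul_assoc, ← Real.exp_add]; ring_nf
      · simp only [Set.indicator_of_notMem hy]; positivity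
  have step2 : (∫ z, C * Real.exp ((1 + a) * ‖F x‖) * Real.exp ((1 + a) * ‖z‖) ∂γ) =
      C * Real.exp ((1 + a) * ‖F x‖) * I := integral_const_mul _ _
  have hexp : Real.exp (a * ‖x‖) * Real.exp (-(a * (‖x‖ - p * ‖F x‖))) =
      Real.exp (a * p * ‖F x‖) := by
    rw [← Real.exp_add]; ring_nf
  have h1ap : 1 + a ≤ a * p := by
    have := (div_le_iff₀ ha).mp hap
    nlinarith
  have step3 : C * Real.exp ((1 + a) * ‖F x‖) * I ≤ C * I * Real.exp (a * p * ‖F x‖) := by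
    have : Real.exp ((1 + a) * ‖F x‖) ≤ Real.exp (a * p * ‖F x‖) :=
      Real.exp_le_exp.2 (mul_le_mul_of_nonneg_right h1ap (norm_nonneg _))
    calc C * Real.exp ((1 + a) * ‖F x‖) * I ≤ C * Real.exp (a * p * ‖F x‖) * I := by
          exact mul_le_mul_of_nonneg_right (mul_le_mul_of_nonneg_left this hC.le) hInn
      _ = C * I * Real.exp (a * p * ‖F x‖) := by ring
  rw [mul_assoc, hexp]
  exact le_trans step1 (by rw [step2]; exact step3)
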